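/- arXiv:gr-qc/0304080 — 3 statements merged into one kernel-verified Lean document; each statement's English description precedes it below -/
import Mathlib

section
/- Let y1, y2 be distinct points in ℝ³ and for x ∈ ℝ³ set r1 = |x − y1|, r2 = |x − y2|, r12 = |y1 − y2|, and g(x) = ln(r1 + r2 + r12). Then for every x outside the segment issues (precisely, for every x with x ≠ y1 and x ≠ y2 and r1 + r2 > r12), the flat-space Laplacian of g with respect to x equals 1/(r1·r2). -/
noncomputable section

abbrev E3 := EuclideanSpace ℝ (Fin 3)

def e3 (i : Fin 3) : E3 := EuclideanSpace.single i 1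

/-- Partial derivative in direction `i`. -/
def pd (i : Fin 3) (f : E3 → ℝ) (x : E3) : ℝ := fderiv ℝ f x (e3 i)

/-- Flat-space Laplacian. -/
def lap (f : E3 → ℝ) (x : E3) : ℝ := ∑ i, pd i (pd i f) x

open RealInnerProductSpace

lemma hasFDerivAt_norm_sub (y x : E3) (h : x ≠ y) :
    HasFDerivAt (fun z : E3 => ‖z - y‖) (‖x - y‖⁻¹ • (innerSL ℝ (x - y))) x := by
  have h0 : x - y ≠ 0 := sub_ne_zero.mpr h
  have hn : ‖x - y‖ ≠ 0 := norm_ne_zero_iff.mpr h0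
  have h1 : HasFDerivAt (fun z : E3 => z - y) (ContinuousLinearMap.id ℝ E3) x :=
    (hasFDerivAt_id x).sub_const y
  have h2 : HasFDerivAt (fun z : E3 => ‖z - y‖ ^ 2)
      ((2 : ℕ) • (innerSL ℝ (x - y)).comp (ContinuousLinearMap.id ℝ E3)) x := h1.norm_sq
  have hsq : ‖x - y‖ ^ 2 ≠ 0 := pow_ne_zero _ hn
  have h3 := (Real.hasDerivAt_sqrt hsq).comp_hasFDerivAt x h2
  have heq : ((fun t => Real.sqrt t) ∘ fun z : E3 => ‖z - y‖ ^ 2) = fun z : E3 => ‖z - y‖ := by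
    funext z; simp [Function.comp, Real.sqrt_sq (norm_nonneg _)]
  rw [heq] at h3
  refine h3.congr_fderiv ?_
  symm
  rw [Real.sqrt_sq (norm_nonneg _)]
  ext v
  simp [smul_smul]
  ring

lemma inner_e3 (i : Fin 3) (v : E3) : ⟪e3 i, v⟫ = v i := by
  simp [e3, EuclideanSpace.inner_single_left]

lemma inner_e3' (i : Fin 3) (v : E3) : ⟪v, e3 i⟫ = v i := by
  rw [real_inner_comm]; exact inner_e3 i v

lemma sum_mul_inner (v w : E3) : ∑ i, v i * w i = ⟪v, w⟫ := by
  rw [PiLp.inner_apply]; simp [mul_comm]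

set_option maxHeartbeats 2000000 in
/-- Δ log(r1 + r2 + r12) = 1/(r1 r2) away from the segment. -/
theorem laplacian_log_kernel (y1 y2 : E3) (hy : y1 ≠ y2) (x : E3)
    (hx1 : x ≠ y1) (hx2 : x ≠ y2)
    (hseg : ‖x - y1‖ + ‖x - y2‖ > ‖y1 - y2‖) :
    lap (fun z => Real.log (‖z - y1‖ + ‖z - y2‖ + ‖y1 - y2‖)) x
      = 1 / (‖x - y1‖ * ‖x - y2‖) := by
  have hc : (0:ℝ) < ‖y1 - y2‖ := norm_pos_iff.mpr (sub_ne_zero.mpr hy)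
  have hr1 : (0:ℝ) < ‖x - y1‖ := norm_pos_iff.mpr (sub_ne_zero.mpr hx1)
  have hr2 : (0:ℝ) < ‖x - y2‖ := norm_pos_iff.mpr (sub_ne_zero.mpr hx2)
  have hS : (0:ℝ) < ‖x - y1‖ + ‖x - y2‖ + ‖y1 - y2‖ := by positivity
  set G : E3 → ℝ := fun z => Real.log (‖z - y1‖ + ‖z - y2‖ + ‖y1 - y2‖) with hGdef
  set F : Fin 3 → E3 → ℝ := fun i z =>
    (⟪e3 i, z - y1⟫ * ‖z - y1‖⁻¹ + ⟪e3 i, z - y2⟫ * ‖z - y2‖⁻¹) *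
      (‖z - y1‖ + ‖z - y2‖ + ‖y1 - y2‖)⁻¹ with hFdef
  -- first derivatives
  have hpdG : ∀ (i : Fin 3) (z : E3), z ≠ y1 → z ≠ y2 → pd i G z = F i z := by
    intro i z h1 h2
    have hSz : HasFDerivAt (fun w : E3 => ‖w - y1‖ + ‖w - y2‖ + ‖y1 - y2‖)
        ((‖z - y1‖⁻¹ • innerSL ℝ (z - y1)) + (‖z - y2‖⁻¹ • innerSL ℝ (z - y2))) z :=
      ((hasFDerivAt_norm_sub y1 z h1).add (hasFDerivAt_norm_sub y2 z h2)).add_const _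
    have hz1 : (0:ℝ) < ‖z - y1‖ := norm_pos_iff.mpr (sub_ne_zero.mpr h1)
    have hz2 : (0:ℝ) < ‖z - y2‖ := norm_pos_iff.mpr (sub_ne_zero.mpr h2)
    have hSne : ‖z - y1‖ + ‖z - y2‖ + ‖y1 - y2‖ ≠ 0 := by positivity
    have hg := hSz.log hSne
    have hfd : fderiv ℝ G z = _ := hg.fderiv
    simp only [pd, hfd, hFdef, ContinuousLinearMap.smul_apply, ContinuousLinearMap.add_apply,
      innerSL_apply_apply, smul_eq_mul, inner_e3, inner_e3']
    ring
  have hU : {z : E3 | z ≠ y1 ∧ z ≠ y2} ∈ nhds x := by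
    have : IsOpen {z : E3 | z ≠ y1 ∧ z ≠ y2} := IsOpen.and isOpen_ne isOpen_ne
    exact this.mem_nhds ⟨hx1, hx2⟩
  have hev : ∀ i, pd i G =ᶠ[nhds x] F i := fun i =>
    Filter.eventually_of_mem hU (fun z hz => hpdG i z hz.1 hz.2)
  have key : ∀ i : Fin 3, pd i (pd i G) x
      = ((‖x - y1‖⁻¹ + ‖x - y2‖⁻¹) * (‖x - y1‖ + ‖x - y2‖ + ‖y1 - y2‖)⁻¹)
        + (-((‖x - y1‖*‖x - y1‖*‖x - y1‖)⁻¹ * (‖x - y1‖ + ‖x - y2‖ + ‖y1 - y2‖)⁻¹)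
            - (‖x - y1‖*‖x - y1‖*(‖x - y1‖ + ‖x - y2‖ + ‖y1 - y2‖)*(‖x - y1‖ + ‖x - y2‖ + ‖y1 - y2‖))⁻¹)
          * ((x - y1) i * (x - y1) i)
        + (-((‖x - y2‖*‖x - y2‖*‖x - y2‖)⁻¹ * (‖x - y1‖ + ‖x - y2‖ + ‖y1 - y2‖)⁻¹)
            - (‖x - y2‖*‖x - y2‖*(‖x - y1‖ + ‖x - y2‖ + ‖y1 - y2‖)*(‖x - y1‖ + ‖x - y2‖ + ‖y1 - y2‖))⁻¹)
          * ((x - y2) i * (x - y2) i)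
        + (-(2:ℝ) * (‖x - y1‖*‖x - y2‖*(‖x - y1‖ + ‖x - y2‖ + ‖y1 - y2‖)*(‖x - y1‖ + ‖x - y2‖ + ‖y1 - y2‖))⁻¹)
          * ((x - y1) i * (x - y2) i) := by
    intro i
    have hDeq : fderiv ℝ (pd i G) x = fderiv ℝ (F i) x := (hev i).fderiv_eq
    have hN1 : HasFDerivAt (fun z : E3 => ⟪e3 i, z - y1⟫)
        ((innerSL ℝ (e3 i)).comp (ContinuousLinearMap.id ℝ E3)) x :=
      (innerSL ℝ (e3 i)).hasFDerivAt.comp x ((hasFDerivAt_id x).sub_const y1)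
    have hN2 : HasFDerivAt (fun z : E3 => ⟪e3 i, z - y2⟫)
        ((innerSL ℝ (e3 i)).comp (ContinuousLinearMap.id ℝ E3)) x :=
      (innerSL ℝ (e3 i)).hasFDerivAt.comp x ((hasFDerivAt_id x).sub_const y2)
    have hI1 : HasFDerivAt (fun z : E3 => ‖z - y1‖⁻¹)
        ((-(‖x - y1‖ ^ 2)⁻¹) • (‖x - y1‖⁻¹ • innerSL ℝ (x - y1))) x :=
      (hasDerivAt_inv hr1.ne').comp_hasFDerivAt x (hasFDerivAt_norm_sub y1 x hx1)
    have hI2 : HasFDerivAt (fun z : E3 => ‖z - y2‖⁻¹)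
        ((-(‖x - y2‖ ^ 2)⁻¹) • (‖x - y2‖⁻¹ • innerSL ℝ (x - y2))) x :=
      (hasDerivAt_inv hr2.ne').comp_hasFDerivAt x (hasFDerivAt_norm_sub y2 x hx2)
    have hSx : HasFDerivAt (fun w : E3 => ‖w - y1‖ + ‖w - y2‖ + ‖y1 - y2‖)
        ((‖x - y1‖⁻¹ • innerSL ℝ (x - y1)) + (‖x - y2‖⁻¹ • innerSL ℝ (x - y2))) x :=
      ((hasFDerivAt_norm_sub y1 x hx1).add (hasFDerivAt_norm_sub y2 x hx2)).add_const _
    have hSinv : HasFDerivAt (fun z : E3 => (‖z - y1‖ + ‖z - y2‖ + ‖y1 - y2‖)⁻¹)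
        ((-((‖x - y1‖ + ‖x - y2‖ + ‖y1 - y2‖) ^ 2)⁻¹) •
          ((‖x - y1‖⁻¹ • innerSL ℝ (x - y1)) + (‖x - y2‖⁻¹ • innerSL ℝ (x - y2)))) x :=
      (hasDerivAt_inv hS.ne').comp_hasFDerivAt x hSx
    have hFi := ((hN1.mul hI1).add (hN2.mul hI2)).mul hSinv
    have hFx : fderiv ℝ (F i) x = _ := hFi.fderiv
    show fderiv ℝ (pd i G) x (e3 i) = _
    rw [hDeq, hFx]
    simp only [ContinuousLinearMap.add_apply, ContinuousLinearMap.smul_apply,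
      ContinuousLinearMap.comp_apply, ContinuousLinearMap.coe_id', id_eq,
      innerSL_apply_apply, smul_eq_mul, inner_e3, inner_e3', Pi.add_apply, Pi.mul_apply]
    have he : (e3 i) i = 1 := by simp [e3, EuclideanSpace.single_apply]
    rw [he]
    field_simp
    ring
  simp only [lap]
  rw [Finset.sum_congr rfl (fun i _ => key i)]
  have hab : ⟪x - y1, x - y2⟫
      = (‖x - y1‖ ^ 2 + ‖x - y2‖ ^ 2 - ‖y1 - y2‖ ^ 2) / 2 := by
    have hba : (x - y2) - (x - y1) = y1 - y2 := by abel
    have h := norm_sub_sq_real (x - y2) (x - y1)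
    rw [hba, real_inner_comm] at h
    linarith
  have haa : ∑ i, (x - y1) i * (x - y1) i = ‖x - y1‖ ^ 2 := by
    rw [sum_mul_inner]; exact real_inner_self_eq_norm_sq _
  have hbb : ∑ i, (x - y2) i * (x - y2) i = ‖x - y2‖ ^ 2 := by
    rw [sum_mul_inner]; exact real_inner_self_eq_norm_sq _
  have habs : ∑ i, (x - y1) i * (x - y2) i
      = (‖x - y1‖ ^ 2 + ‖x - y2‖ ^ 2 - ‖y1 - y2‖ ^ 2) / 2 := by
    rw [sum_mul_inner]; exact hab
  rw [Fin.sum_univ_three] at *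
  have expand : ∀ (K0 K1 K2 K3 u0 u1 u2 v0 v1 v2 : ℝ),
      (K0 + K1 * (u0*u0) + K2 * (v0*v0) + K3 * (u0*v0))
      + (K0 + K1 * (u1*u1) + K2 * (v1*v1) + K3 * (u1*v1))
      + (K0 + K1 * (u2*u2) + K2 * (v2*v2) + K3 * (u2*v2))
      = 3*K0 + K1*(u0*u0+u1*u1+u2*u2) + K2*(v0*v0+v1*v1+v2*v2) + K3*(u0*v0+u1*v1+u2*v2) := by
    intros; ring
  rw [expand, haa, hbb, habs]
  have h1 := hr1.ne'
  have h2 := hr2.ne'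
  have h3 := hS.ne'
  field_simp
  ring
end
end

section
/- With g = ln(r1 + r2 + r12) as above, the contracted double derivative D g ≡ ∑ᵢ ∂²g/∂y1^i ∂y2^i equals 1/(2 r1 r2) − 1/(2 r1 r12) − 1/(2 r2 r12), for x ≠ y1, x ≠ y2, y1 ≠ y2. -/
open scoped RealInnerProductSpace

noncomputable section

/-- Mixed second partial derivative `∂²f/∂y1^i ∂y2^j` of a function of two points. -/
def d12 (i j : Fin 3) (f : E3 → E3 → ℝ) (y1 y2 : E3) : ℝ :=
  fderiv ℝ (fun z1 => fderiv ℝ (f z1) y2 (e3 j)) y1 (e3 i)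


lemma L1 {w : E3} (hw : w ≠ 0) : HasFDerivAt (fun y : E3 => ‖y‖) (‖w‖⁻¹ • innerSL ℝ w) w := by
  have h1 : HasFDerivAt (fun y : E3 => ‖y‖ ^ 2) (2 • innerSL ℝ w) w :=
    (hasStrictFDerivAt_norm_sq w).hasFDerivAt
  have h2 : HasDerivAt Real.sqrt (1 / (2 * Real.sqrt (‖w‖ ^ 2))) (‖w‖ ^ 2) :=
    Real.hasDerivAt_sqrt (pow_ne_zero 2 (norm_ne_zero_iff.2 hw))
  have h3 := h2.comp_hasFDerivAt w h1
  have hfn : (Real.sqrt ∘ fun y : E3 => ‖y‖ ^ 2) = fun y : E3 => ‖y‖ :=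
    funext fun y => Real.sqrt_sq (norm_nonneg y)
  rw [hfn] at h3
  refine h3.congr_fderiv ?_
  ext v
  have : Real.sqrt (‖w‖ ^ 2) = ‖w‖ := Real.sqrt_sq (norm_nonneg w)
  simp [this, smul_smul]
  field_simp

lemma L2 (u : E3) {p : E3} (h : u ≠ p) :
    HasFDerivAt (fun z : E3 => ‖u - z‖) (-(‖u - p‖⁻¹ • innerSL ℝ (u - p))) p := by
  have h2 : HasFDerivAt (fun z : E3 => u - z) (-(ContinuousLinearMap.id ℝ E3)) p :=
    (hasFDerivAt_id p).const_sub u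
  have := (L1 (sub_ne_zero.2 h)).comp p h2
  refine this.congr_fderiv ?_
  ext v; simp

lemma L3 (v : E3) {p : E3} (h : p ≠ v) :
    HasFDerivAt (fun z : E3 => ‖z - v‖) (‖p - v‖⁻¹ • innerSL ℝ (p - v)) p := by
  have := (L1 (sub_ne_zero.2 h)).comp p ((hasFDerivAt_id p).sub_const v)
  refine this.congr_fderiv ?_
  ext v; simp

lemma L4 (v p : E3) (j : Fin 3) :
    HasFDerivAt (fun z : E3 => (z - v) j) (EuclideanSpace.proj (𝕜 := ℝ) j) p := by
  have := (EuclideanSpace.proj (𝕜 := ℝ) j).hasFDerivAt.comp p ((hasFDerivAt_id p).sub_const v)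
  refine this.congr_fderiv ?_
  ext v; simp

lemma innerSL_e3 (w : E3) (j : Fin 3) : (innerSL ℝ w) (e3 j) = w j := by
  simp [e3, EuclideanSpace.inner_single_right]

lemma proj_e3 (j : Fin 3) : (EuclideanSpace.proj (𝕜 := ℝ) j) (e3 j) = 1 := by
  simp [e3]

lemma sumsq (w : E3) : ∑ j, (w j) ^ 2 = ‖w‖ ^ 2 := by
  rw [EuclideanSpace.norm_eq, Real.sq_sqrt (by positivity)]
  simp [sq_abs]

lemma inner_fderiv (x z1 y2 : E3) (hx2 : x ≠ y2) (hz2 : z1 ≠ y2) (j : Fin 3) :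
    fderiv ℝ (fun z2 : E3 => Real.log (‖x - z1‖ + ‖x - z2‖ + ‖z1 - z2‖)) y2 (e3 j)
      = (-((x - y2) j) * ‖x - y2‖⁻¹ - ((z1 - y2) j) * ‖z1 - y2‖⁻¹)
          * (‖x - z1‖ + ‖x - y2‖ + ‖z1 - y2‖)⁻¹ := by
  have hr2 : (0:ℝ) < ‖x - y2‖ := norm_pos_iff.2 (sub_ne_zero.2 hx2)
  have hS : (0:ℝ) < ‖x - z1‖ + ‖x - y2‖ + ‖z1 - y2‖ := by positivity
  have hA := L2 x hx2
  have hB := L2 z1 hz2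
  have hS2 : HasFDerivAt (fun z2 : E3 => ‖x - z1‖ + ‖x - z2‖ + ‖z1 - z2‖)
      ((-(‖x - y2‖⁻¹ • innerSL ℝ (x - y2))) + (-(‖z1 - y2‖⁻¹ • innerSL ℝ (z1 - y2)))) y2 := by
    exact (hA.const_add ‖x - z1‖).add hB
  have hlog : HasFDerivAt (fun z2 : E3 => Real.log (‖x - z1‖ + ‖x - z2‖ + ‖z1 - z2‖))
      ((‖x - z1‖ + ‖x - y2‖ + ‖z1 - y2‖)⁻¹ •
        ((-(‖x - y2‖⁻¹ • innerSL ℝ (x - y2))) + (-(‖z1 - y2‖⁻¹ • innerSL ℝ (z1 - y2))))) y2 :=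
    hS2.log hS.ne'
  rw [hlog.fderiv]
  simp only [ContinuousLinearMap.smul_apply, ContinuousLinearMap.add_apply,
    ContinuousLinearMap.neg_apply, innerSL_e3, smul_eq_mul]
  ring

lemma perj (x y1 y2 : E3) (h1 : x ≠ y1) (h2 : x ≠ y2) (h12 : y1 ≠ y2) (j : Fin 3) :
    d12 j j (fun z1 z2 => Real.log (‖x - z1‖ + ‖x - z2‖ + ‖z1 - z2‖)) y1 y2 =
      -(‖y1 - y2‖ * (‖x - y1‖ + ‖x - y2‖ + ‖y1 - y2‖))⁻¹
      + ((‖y1 - y2‖ ^ 3 * (‖x - y1‖ + ‖x - y2‖ + ‖y1 - y2‖))⁻¹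
          + (‖y1 - y2‖ ^ 2 * (‖x - y1‖ + ‖x - y2‖ + ‖y1 - y2‖) ^ 2)⁻¹) * ((y1 - y2) j) ^ 2
      - (‖x - y1‖ * ‖x - y2‖ * (‖x - y1‖ + ‖x - y2‖ + ‖y1 - y2‖) ^ 2)⁻¹
          * ((x - y1) j * (x - y2) j)
      + (‖x - y2‖ * ‖y1 - y2‖ * (‖x - y1‖ + ‖x - y2‖ + ‖y1 - y2‖) ^ 2)⁻¹
          * ((x - y2) j * ((y1 - y2) j))
      - (‖x - y1‖ * ‖y1 - y2‖ * (‖x - y1‖ + ‖x - y2‖ + ‖y1 - y2‖) ^ 2)⁻¹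
          * ((x - y1) j * ((y1 - y2) j)) := by
  have hr1 : (0:ℝ) < ‖x - y1‖ := norm_pos_iff.2 (sub_ne_zero.2 h1)
  have hr2 : (0:ℝ) < ‖x - y2‖ := norm_pos_iff.2 (sub_ne_zero.2 h2)
  have hr12 : (0:ℝ) < ‖y1 - y2‖ := norm_pos_iff.2 (sub_ne_zero.2 h12)
  have hS : (0:ℝ) < ‖x - y1‖ + ‖x - y2‖ + ‖y1 - y2‖ := by positivity
  -- the explicit outer function
  set G : E3 → ℝ := fun z1 =>
    (-((x - y2) j) * ‖x - y2‖⁻¹ - ((z1 - y2) j) * ‖z1 - y2‖⁻¹)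
      * (‖x - z1‖ + ‖x - y2‖ + ‖z1 - y2‖)⁻¹ with hGdef
  have hEv : (fun z1 => fderiv ℝ
      (fun z2 => Real.log (‖x - z1‖ + ‖x - z2‖ + ‖z1 - z2‖)) y2 (e3 j)) =ᶠ[nhds y1] G :=
    (eventually_ne_nhds h12).mono fun z1 hz1 => inner_fderiv x z1 y2 h2 hz1 j
  -- derivative of G at y1
  have h_inv12 : HasFDerivAt (fun z : E3 => ‖z - y2‖⁻¹)
      ((-(‖y1 - y2‖ ^ 2)⁻¹) • (‖y1 - y2‖⁻¹ • innerSL ℝ (y1 - y2))) y1 :=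
    (hasDerivAt_inv hr12.ne').comp_hasFDerivAt y1 (L3 y2 h12)
  have h_term := (L4 y2 y1 j).mul h_inv12
  have hN := h_term.const_sub (-((x - y2) j) * ‖x - y2‖⁻¹)
  have hS1 : HasFDerivAt (fun z : E3 => ‖x - z‖ + ‖x - y2‖ + ‖z - y2‖)
      ((-(‖x - y1‖⁻¹ • innerSL ℝ (x - y1))) + (‖y1 - y2‖⁻¹ • innerSL ℝ (y1 - y2))) y1 :=
    ((L2 x h1).add_const ‖x - y2‖).add (L3 y2 h12)
  have h_invS : HasFDerivAt (fun z : E3 => (‖x - z‖ + ‖x - y2‖ + ‖z - y2‖)⁻¹)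
      ((-((‖x - y1‖ + ‖x - y2‖ + ‖y1 - y2‖) ^ 2)⁻¹) •
        ((-(‖x - y1‖⁻¹ • innerSL ℝ (x - y1))) + (‖y1 - y2‖⁻¹ • innerSL ℝ (y1 - y2)))) y1 :=
    (hasDerivAt_inv hS.ne').comp_hasFDerivAt y1 hS1
  have hG : HasFDerivAt G _ y1 := hN.mul h_invS
  rw [d12, hEv.fderiv_eq, hG.fderiv]
  simp only [ContinuousLinearMap.add_apply, ContinuousLinearMap.smul_apply,
    ContinuousLinearMap.neg_apply, innerSL_e3, proj_e3, smul_eq_mul, Pi.mul_apply]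
  field_simp
  ring

/-- `D g = 1/(2 r1 r2) − 1/(2 r1 r12) − 1/(2 r2 r12)`. -/
theorem Dg_formula (x y1 y2 : E3)
    (h1 : x ≠ y1) (h2 : x ≠ y2) (h12 : y1 ≠ y2) :
    (∑ i, d12 i i (fun z1 z2 => Real.log (‖x - z1‖ + ‖x - z2‖ + ‖z1 - z2‖)) y1 y2) =
      1 / (2 * ‖x - y1‖ * ‖x - y2‖) - 1 / (2 * ‖x - y1‖ * ‖y1 - y2‖)
        - 1 / (2 * ‖x - y2‖ * ‖y1 - y2‖) := by
  have hr1 : (0:ℝ) < ‖x - y1‖ := norm_pos_iff.2 (sub_ne_zero.2 h1)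
  have hr2 : (0:ℝ) < ‖x - y2‖ := norm_pos_iff.2 (sub_ne_zero.2 h2)
  have hr12 : (0:ℝ) < ‖y1 - y2‖ := norm_pos_iff.2 (sub_ne_zero.2 h12)
  have hS : (0:ℝ) < ‖x - y1‖ + ‖x - y2‖ + ‖y1 - y2‖ := by positivity
  have hb : (x - y1) + (y1 - y2) = x - y2 := by abel
  have hA : ⟪x - y1, y1 - y2⟫ = (‖x - y2‖ ^ 2 - ‖x - y1‖ ^ 2 - ‖y1 - y2‖ ^ 2) / 2 := by
    have h := norm_add_sq_real (x - y1) (y1 - y2)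
    rw [hb] at h
    linarith
  have hAB : ⟪x - y1, x - y2⟫ = ‖x - y1‖ ^ 2 + ⟪x - y1, y1 - y2⟫ := by
    rw [← hb, inner_add_right, real_inner_self_eq_norm_sq]
  have hBC : ⟪x - y2, y1 - y2⟫ = ⟪x - y1, y1 - y2⟫ + ‖y1 - y2‖ ^ 2 := by
    rw [← hb, inner_add_left, real_inner_self_eq_norm_sq]
  have hco : ∀ v w : E3, ⟪v, w⟫ = ∑ i, v i * w i := fun v w => by
    simp [PiLp.inner_apply, RCLike.inner_apply, mul_comm]
  have hAB' : ∑ i, (x - y1) i * (x - y2) i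
      = ‖x - y1‖ ^ 2 + (‖x - y2‖ ^ 2 - ‖x - y1‖ ^ 2 - ‖y1 - y2‖ ^ 2) / 2 := by
    rw [← hco, hAB, hA]
  have hBC' : ∑ i, (x - y2) i * (y1 - y2) i
      = (‖x - y2‖ ^ 2 - ‖x - y1‖ ^ 2 - ‖y1 - y2‖ ^ 2) / 2 + ‖y1 - y2‖ ^ 2 := by
    rw [← hco, hBC, hA]
  have hAC' : ∑ i, (x - y1) i * (y1 - y2) i
      = (‖x - y2‖ ^ 2 - ‖x - y1‖ ^ 2 - ‖y1 - y2‖ ^ 2) / 2 := by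
    rw [← hco, hA]
  have hC2 : ∑ i, ((y1 - y2) i) ^ 2 = ‖y1 - y2‖ ^ 2 := sumsq _
  have hfinal :
      3 * (-(‖y1 - y2‖ * (‖x - y1‖ + ‖x - y2‖ + ‖y1 - y2‖))⁻¹)
      + ((‖y1 - y2‖ ^ 3 * (‖x - y1‖ + ‖x - y2‖ + ‖y1 - y2‖))⁻¹
          + (‖y1 - y2‖ ^ 2 * (‖x - y1‖ + ‖x - y2‖ + ‖y1 - y2‖) ^ 2)⁻¹) * ‖y1 - y2‖ ^ 2
      - (‖x - y1‖ * ‖x - y2‖ * (‖x - y1‖ + ‖x - y2‖ + ‖y1 - y2‖) ^ 2)⁻¹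
          * (‖x - y1‖ ^ 2 + (‖x - y2‖ ^ 2 - ‖x - y1‖ ^ 2 - ‖y1 - y2‖ ^ 2) / 2)
      + (‖x - y2‖ * ‖y1 - y2‖ * (‖x - y1‖ + ‖x - y2‖ + ‖y1 - y2‖) ^ 2)⁻¹
          * ((‖x - y2‖ ^ 2 - ‖x - y1‖ ^ 2 - ‖y1 - y2‖ ^ 2) / 2 + ‖y1 - y2‖ ^ 2)
      - (‖x - y1‖ * ‖y1 - y2‖ * (‖x - y1‖ + ‖x - y2‖ + ‖y1 - y2‖) ^ 2)⁻¹
          * ((‖x - y2‖ ^ 2 - ‖x - y1‖ ^ 2 - ‖y1 - y2‖ ^ 2) / 2)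
      = 1 / (2 * ‖x - y1‖ * ‖x - y2‖) - 1 / (2 * ‖x - y1‖ * ‖y1 - y2‖)
        - 1 / (2 * ‖x - y2‖ * ‖y1 - y2‖) := by
    field_simp
    ring
  simp only [perj x y1 y2 h1 h2 h12]
  rw [Fin.sum_univ_three] at hAB' hBC' hAC' hC2 ⊢
  linear_combination
    ((‖y1 - y2‖ ^ 3 * (‖x - y1‖ + ‖x - y2‖ + ‖y1 - y2‖))⁻¹
      + (‖y1 - y2‖ ^ 2 * (‖x - y1‖ + ‖x - y2‖ + ‖y1 - y2‖) ^ 2)⁻¹) * hC2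
    - (‖x - y1‖ * ‖x - y2‖ * (‖x - y1‖ + ‖x - y2‖ + ‖y1 - y2‖) ^ 2)⁻¹ * hAB'
    + (‖x - y2‖ * ‖y1 - y2‖ * (‖x - y1‖ + ‖x - y2‖ + ‖y1 - y2‖) ^ 2)⁻¹ * hBC'
    - (‖x - y1‖ * ‖y1 - y2‖ * (‖x - y1‖ + ‖x - y2‖ + ‖y1 - y2‖) ^ 2)⁻¹ * hAC'
    + hfinal
end
end

section
/- Fix distinct y1, y2 ∈ ℝ³ and let s_{ij}(x) = ∂²g/∂y1^{<i}∂y2^{j>} with g = ln(r1+r2+r12). Then s_{ij} extends continuously to x = y1, with limit value as x → y1 (along direction n1 = (x−y1)/|x−y1| fixed) equal to (1/r12²)(n12^{<i}n12^{j>} − ½ n1^{<i}n12^{j>}). -/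
noncomputable section
open Filter

/-- `ᵢg_ⱼ` as a function of the field point `x`. -/
def gmix (y1 y2 : E3) (i j : Fin 3) (x : E3) : ℝ :=
  d12 i j (fun z1 z2 => Real.log (‖x - z1‖ + ‖x - z2‖ + ‖z1 - z2‖)) y1 y2

/-- The STF generating function `s_{ij}(x)`. -/
def sTF (y1 y2 : E3) (i j : Fin 3) (x : E3) : ℝ :=
  (gmix y1 y2 i j x + gmix y1 y2 j i x) / 2
    - (1 / 3) * (if i = j then (1:ℝ) else 0) * ∑ k, gmix y1 y2 k k x

/-- STF part of `u^i v^j` for vectors given componentwise. -/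
def stf2 (u v : Fin 3 → ℝ) (i j : Fin 3) : ℝ :=
  (u i * v j + u j * v i) / 2
    - (1 / 3) * (if i = j then (1:ℝ) else 0) * ∑ k, u k * v k

/-! ### Auxiliary derivative lemmas -/

lemma hasFDerivAt_norm_ne {x : E3} (hx : x ≠ 0) :
    HasFDerivAt (fun y : E3 => ‖y‖) (‖x‖⁻¹ • innerSL ℝ x) x := by
  have hsq : HasFDerivAt (fun y : E3 => ‖y‖ ^ 2) (2 • innerSL ℝ x) x := by
    simpa using (hasFDerivAt_id x).norm_sq
  have h2 : (‖x‖ : ℝ) ^ 2 ≠ 0 := pow_ne_zero 2 (norm_ne_zero_iff.2 hx)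
  have h3 := hsq.sqrt h2
  simp only [Real.sqrt_sq (norm_nonneg _)] at h3
  refine h3.congr_fderiv ?_
  ext v
  have hx' : ‖x‖ ≠ 0 := norm_ne_zero_iff.2 hx
  simp only [ContinuousLinearMap.coe_smul', Pi.smul_apply, smul_eq_mul,
    ContinuousLinearMap.smul_apply, innerSL_apply_apply]
  field_simp
  ring

lemma hasFDerivAt_norm_sub_left (a : E3) {b : E3} (h : a ≠ b) :
    HasFDerivAt (fun z : E3 => ‖a - z‖) (‖a - b‖⁻¹ • innerSL ℝ (b - a)) b := by
  have hin : HasFDerivAt (fun z : E3 => a - z)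
      ((0 : E3 →L[ℝ] E3) - ContinuousLinearMap.id ℝ E3) b :=
    (hasFDerivAt_const a b).sub (hasFDerivAt_id b)
  have := (hasFDerivAt_norm_ne (sub_ne_zero.2 h)).comp b hin
  refine this.congr_fderiv ?_
  ext v
  simp [real_inner_smul_left, inner_sub_left, inner_neg_left]
  ring

lemma hasFDerivAt_norm_sub_right {a : E3} (c : E3) (h : a ≠ c) :
    HasFDerivAt (fun z : E3 => ‖z - c‖) (‖a - c‖⁻¹ • innerSL ℝ (a - c)) a := by
  have hin : HasFDerivAt (fun z : E3 => z - c)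
      (ContinuousLinearMap.id ℝ E3 - (0 : E3 →L[ℝ] E3)) a :=
    (hasFDerivAt_id a).sub (hasFDerivAt_const c a)
  have := (hasFDerivAt_norm_ne (sub_ne_zero.2 h)).comp a hin
  refine this.congr_fderiv ?_
  ext v
  simp [real_inner_smul_left]

lemma inner_fderiv_eq (x z1 y2 : E3) (hx2 : x ≠ y2) (h12 : z1 ≠ y2) (j : Fin 3) :
    fderiv ℝ (fun z2 => Real.log (‖x - z1‖ + ‖x - z2‖ + ‖z1 - z2‖)) y2 (e3 j)
      = (‖x - z1‖ + ‖x - y2‖ + ‖z1 - y2‖)⁻¹ *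
        ((y2 - x) j * ‖x - y2‖⁻¹ + (y2 - z1) j * ‖z1 - y2‖⁻¹) := by
  have hS : HasFDerivAt (fun z2 : E3 => ‖x - z1‖ + ‖x - z2‖ + ‖z1 - z2‖)
      (((0 : E3 →L[ℝ] ℝ) + ‖x - y2‖⁻¹ • innerSL ℝ (y2 - x)) +
        ‖z1 - y2‖⁻¹ • innerSL ℝ (y2 - z1)) y2 :=
    ((hasFDerivAt_const ‖x - z1‖ y2).add (hasFDerivAt_norm_sub_left x hx2)).add
      (hasFDerivAt_norm_sub_left z1 h12)
  have hpos : 0 < ‖x - z1‖ + ‖x - y2‖ + ‖z1 - y2‖ := by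
    have := norm_pos_iff.2 (sub_ne_zero.2 hx2)
    have := norm_nonneg (x - z1)
    have := norm_nonneg (z1 - y2)
    linarith
  have hlog := hS.log hpos.ne'
  rw [hlog.fderiv]
  simp [e3, EuclideanSpace.inner_single_right, real_inner_smul_left, mul_comm, mul_add]
  ring

lemma gmix_eq (x y1 y2 : E3) (hx1 : x ≠ y1) (hx2 : x ≠ y2) (h12 : y1 ≠ y2) (i j : Fin 3) :
    gmix y1 y2 i j x =
      (‖x - y1‖ + ‖x - y2‖ + ‖y1 - y2‖)⁻¹ *
        (-(if i = j then (1:ℝ) else 0) * ‖y1 - y2‖⁻¹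
          + (y1 - y2) j * (y1 - y2) i * (‖y1 - y2‖ ^ 3)⁻¹)
      - ((‖x - y1‖ + ‖x - y2‖ + ‖y1 - y2‖) ^ 2)⁻¹ *
        ((y2 - x) j * ‖x - y2‖⁻¹ + (y2 - y1) j * ‖y1 - y2‖⁻¹) *
        ((y1 - x) i * ‖x - y1‖⁻¹ + (y1 - y2) i * ‖y1 - y2‖⁻¹) := by
  have hr12 : ‖y1 - y2‖ ≠ 0 := norm_ne_zero_iff.2 (sub_ne_zero.2 h12)
  have hr1 : ‖x - y1‖ ≠ 0 := norm_ne_zero_iff.2 (sub_ne_zero.2 hx1)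
  have hr2 : ‖x - y2‖ ≠ 0 := norm_ne_zero_iff.2 (sub_ne_zero.2 hx2)
  -- the function G agreeing with the inner fderiv near y1
  set G : E3 → ℝ := fun z1 => (‖x - z1‖ + ‖x - y2‖ + ‖z1 - y2‖)⁻¹ *
      ((y2 - x) j * ‖x - y2‖⁻¹ + (y2 - z1) j * ‖z1 - y2‖⁻¹) with hGdef
  have hmem : {z1 : E3 | z1 ≠ y2} ∈ nhds y1 := isOpen_ne.mem_nhds h12
  have hFG : (fun z1 => fderiv ℝ
        (fun z2 => Real.log (‖x - z1‖ + ‖x - z2‖ + ‖z1 - z2‖)) y2 (e3 j)) =ᶠ[nhds y1] G :=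
    Filter.eventually_of_mem hmem (fun z1 hz1 => inner_fderiv_eq x z1 y2 hx2 hz1 j)
  -- derivative of S
  have hS : HasFDerivAt (fun z1 : E3 => ‖x - z1‖ + ‖x - y2‖ + ‖z1 - y2‖)
      ((‖x - y1‖⁻¹ • innerSL ℝ (y1 - x) + (0 : E3 →L[ℝ] ℝ)) +
        ‖y1 - y2‖⁻¹ • innerSL ℝ (y1 - y2)) y1 :=
    ((hasFDerivAt_norm_sub_left x hx1).add (hasFDerivAt_const ‖x - y2‖ y1)).add
      (hasFDerivAt_norm_sub_right y2 h12)
  have hSpos : 0 < ‖x - y1‖ + ‖x - y2‖ + ‖y1 - y2‖ := by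
    have h := norm_pos_iff.2 (sub_ne_zero.2 h12)
    have := norm_nonneg (x - y1); have := norm_nonneg (x - y2); linarith
  have hSinv := (hasDerivAt_inv hSpos.ne').comp_hasFDerivAt y1 hS
  -- derivative of the second factor A
  have hcoord : HasFDerivAt (fun z1 : E3 => (y2 - z1) j)
      ((0 : E3 →L[ℝ] ℝ) - EuclideanSpace.proj j) y1 :=
    (hasFDerivAt_const (y2 j) y1).sub ((EuclideanSpace.proj j : E3 →L[ℝ] ℝ).hasFDerivAt)
  have hinv12 := (hasDerivAt_inv hr12).comp_hasFDerivAt y1 (hasFDerivAt_norm_sub_right y2 h12)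
  have hA : HasFDerivAt (fun z1 : E3 => (y2 - x) j * ‖x - y2‖⁻¹ + (y2 - z1) j * ‖z1 - y2‖⁻¹)
      ((0 : E3 →L[ℝ] ℝ) + ((y2 - y1) j • ((-(‖y1 - y2‖ ^ 2)⁻¹) •
          (‖y1 - y2‖⁻¹ • innerSL ℝ (y1 - y2)))
        + ‖y1 - y2‖⁻¹ • ((0 : E3 →L[ℝ] ℝ) - EuclideanSpace.proj j))) y1 :=
    (hasFDerivAt_const _ y1).add (hcoord.mul hinv12)
  have hG := hSinv.mul hA
  have : gmix y1 y2 i j x = fderiv ℝ G y1 (e3 i) := by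
    rw [gmix, d12, hFG.fderiv_eq]
  simp only [Function.comp_def, Pi.mul_def] at hG
  have hS0 : (‖x - y1‖ + ‖x - y2‖ + ‖y1 - y2‖) ≠ 0 := hSpos.ne'
  rw [this, hGdef, hG.fderiv]
  by_cases hij : i = j
  · subst hij
    simp [e3, EuclideanSpace.inner_single_right, real_inner_smul_left]
    ring
  · have hji : ¬ j = i := fun h => hij h.symm
    simp [e3, EuclideanSpace.inner_single_right, real_inner_smul_left, hij, hji]
    ring

set_option maxHeartbeats 1000000 in
/-- limit of `s_{ij}` as `x → y1` along a fixed direction `n1`. -/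
theorem sTF_limit_at_puncture (y1 y2 : E3) (hy : y1 ≠ y2)
    (n1 : E3) (hn1 : ‖n1‖ = 1) (i j : Fin 3) :
    Tendsto (fun t : ℝ => sTF y1 y2 i j (y1 + t • n1)) (nhdsWithin 0 (Set.Ioi 0))
      (nhds ((1 / ‖y1 - y2‖ ^ 2) *
        (stf2 (fun k => (y1 - y2) k / ‖y1 - y2‖) (fun k => (y1 - y2) k / ‖y1 - y2‖) i j
          - (1 / 2) * stf2 (fun k => n1 k) (fun k => (y1 - y2) k / ‖y1 - y2‖) i j))) := by
  have hr : ‖y1 - y2‖ ≠ 0 := norm_ne_zero_iff.2 (sub_ne_zero.2 hy)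
  have hr0 : 0 < ‖y1 - y2‖ := norm_pos_iff.2 (sub_ne_zero.2 hy)
  -- explicit formula along the ray
  set gm : Fin 3 → Fin 3 → ℝ → ℝ := fun a b t =>
    (t + ‖y1 + t • n1 - y2‖ + ‖y1 - y2‖)⁻¹ *
        (-(if a = b then (1:ℝ) else 0) * ‖y1 - y2‖⁻¹
          + (y1 - y2) b * (y1 - y2) a * (‖y1 - y2‖ ^ 3)⁻¹)
      - ((t + ‖y1 + t • n1 - y2‖ + ‖y1 - y2‖) ^ 2)⁻¹ *
        ((y2 - (y1 + t • n1)) b * ‖y1 + t • n1 - y2‖⁻¹ + (y2 - y1) b * ‖y1 - y2‖⁻¹) *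
        (-(n1 a) + (y1 - y2) a * ‖y1 - y2‖⁻¹) with hgmdef
  have hgm : ∀ (a b : Fin 3) (t : ℝ), 0 < t → t < ‖y1 - y2‖ →
      gmix y1 y2 a b (y1 + t • n1) = gm a b t := by
    intro a b t ht htr
    have htne : t ≠ 0 := ht.ne'
    have hx1 : y1 + t • n1 ≠ y1 := by
      intro h
      have : t • n1 = 0 := by
        have := congrArg (fun z => z - y1) h; simpa [add_sub_cancel_left] using this
      rcases smul_eq_zero.1 this with h' | h'
      · exact htne h'
      · rw [h'] at hn1; simp at hn1
    have hnorm1 : ‖y1 + t • n1 - y1‖ = t := by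
      simp [add_sub_cancel_left, norm_smul, abs_of_pos ht, hn1]
    have hx2 : y1 + t • n1 ≠ y2 := by
      intro h
      have he : y1 - y2 = -(t • n1) := by rw [← h]; abel
      have h2 : ‖y1 - y2‖ = t := by
        rw [he, norm_neg, norm_smul, hn1, Real.norm_eq_abs, abs_of_pos ht, mul_one]
      exact absurd h2 (ne_of_gt htr)
    rw [gmix_eq (y1 + t • n1) y1 y2 hx1 hx2 hy a b, hnorm1]
    have hfac : (y1 - (y1 + t • n1)) a * t⁻¹ = -(n1 a) := by
      have h1 : (y1 - (y1 + t • n1)) a = -(t * n1 a) := by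
        simp [PiLp.sub_apply, PiLp.add_apply, PiLp.smul_apply, smul_eq_mul]
      rw [h1]
      field_simp
    rw [hfac]
  -- continuity of gm at 0
  have hnormc : ContinuousAt (fun t : ℝ => ‖y1 + t • n1 - y2‖) 0 := by fun_prop
  have hS0 : (0:ℝ) + ‖y1 + (0:ℝ) • n1 - y2‖ + ‖y1 - y2‖ ≠ 0 := by
    simp only [zero_smul, add_zero, zero_add]
    positivity
  have hr2c0 : ‖y1 + (0:ℝ) • n1 - y2‖ ≠ 0 := by simpa using hr
  have hcont : ∀ a b : Fin 3, ContinuousAt (gm a b) 0 := by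
    intro a b
    rw [hgmdef]
    have hSc : ContinuousAt (fun t : ℝ => t + ‖y1 + t • n1 - y2‖ + ‖y1 - y2‖) 0 := by
      fun_prop
    have hcoordc : ContinuousAt (fun t : ℝ => (y2 - (y1 + t • n1)) b) 0 := by
      simp only [PiLp.sub_apply, PiLp.add_apply, PiLp.smul_apply, smul_eq_mul]
      fun_prop
    exact (((hSc.inv₀ hS0).mul continuousAt_const).sub
      ((((hSc.pow 2).inv₀ (pow_ne_zero 2 hS0)).mul
        ((hcoordc.mul (hnormc.inv₀ hr2c0)).add continuousAt_const)).mul continuousAt_const))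
  -- value of gm at 0
  have hgm0 : ∀ a b : Fin 3, gm a b 0 = (1 / (2 * ‖y1 - y2‖ ^ 2)) *
      (2 * ((y1 - y2) a / ‖y1 - y2‖) * ((y1 - y2) b / ‖y1 - y2‖)
        - n1 a * ((y1 - y2) b / ‖y1 - y2‖)
        - (if a = b then (1:ℝ) else 0)) := by
    intro a b
    simp only [hgmdef]
    simp only [zero_smul, add_zero, zero_add, PiLp.sub_apply]
    field_simp
    ring
  -- the combined explicit function
  set H : ℝ → ℝ := fun t => (gm i j t + gm j i t) / 2
    - (1 / 3) * (if i = j then (1:ℝ) else 0) * ∑ k, gm k k t with hHdef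
  have hHcont : ContinuousAt H 0 := by
    have hsum : ContinuousAt (fun t : ℝ => ∑ k, gm k k t) 0 := by
      simp only [Fin.sum_univ_three]
      exact ((hcont 0 0).add (hcont 1 1)).add (hcont 2 2)
    exact (((hcont i j).add (hcont j i)).div_const 2).sub
      ((continuousAt_const.mul continuousAt_const).mul hsum)
  have hHval : H 0 = (1 / ‖y1 - y2‖ ^ 2) *
      (stf2 (fun k => (y1 - y2) k / ‖y1 - y2‖) (fun k => (y1 - y2) k / ‖y1 - y2‖) i j
        - (1 / 2) * stf2 (fun k => n1 k) (fun k => (y1 - y2) k / ‖y1 - y2‖) i j) := by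
    rw [hHdef]
    simp only [stf2, Fin.sum_univ_three, hgm0]
    by_cases hij : i = j
    · subst hij
      simp only [if_pos rfl, if_true]
      field_simp
      ring
    · have hji : ¬ j = i := fun h => hij h.symm
      simp only [if_neg hij, if_neg hji]
      field_simp
      ring
  have hev : (fun t : ℝ => sTF y1 y2 i j (y1 + t • n1)) =ᶠ[nhdsWithin 0 (Set.Ioi 0)] H := by
    have hmem : Set.Ioo (0:ℝ) ‖y1 - y2‖ ∈ nhdsWithin 0 (Set.Ioi 0) :=
      Ioo_mem_nhdsGT_of_mem ⟨le_refl 0, hr0⟩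
    refine Filter.eventually_of_mem hmem (fun t ht => ?_)
    simp only [sTF, hHdef]
    simp only [hgm _ _ t ht.1 ht.2]
  rw [← hHval]
  exact Tendsto.congr' hev.symm (hHcont.continuousWithinAt.tendsto)
end
end
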